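/- Let T be a triangulated category with countable coproducts, let T₀ → T₁ → T₂ → ⋯ be a sequence of objects and morphisms in T, and let M be its Milnor colimit, i.e. the cone of the morphism id − shift : ∐ᵢ Tᵢ → ∐ᵢ Tᵢ. Suppose X is an object with Hom(Tᵢ, X[n]) = 0 for all i ≥ 0 and all n > 0, and the inverse system of abelian groups Hom(Tᵢ, X) has all transition maps (induced by the fᵢ) surjective. Then Hom(M, X[n]) = 0 for all n > 0. -/

import Mathlib

open CategoryTheory Limits Pretriangulated

/-- Mittag-Leffler style recursion: if each transition map on `Hom(-, X)` is surjective,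
then `id − shift` is surjective on sequences of morphisms. -/
lemma stmt_5_aux {C : Type*} [Category C] [Preadditive C]
    (T : ℕ → C) (f : ∀ i, T i ⟶ T (i + 1)) (X : C)
    (hsurj : ∀ i : ℕ, Function.Surjective (fun g : T (i + 1) ⟶ X => f i ≫ g))
    (t : ∀ i, T i ⟶ X) :
    ∃ g : ∀ i, T i ⟶ X, ∀ i, g i - f i ≫ g (i + 1) = t i := by
  choose s hs using hsurj
  refine ⟨fun i => Nat.rec 0 (fun i gi => s i (gi - t i)) i, fun i => ?_⟩
  have := hs i (Nat.rec (motive := fun i => T i ⟶ X) 0 (fun i gi => s i (gi - t i)) i - t i)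
  simp only at this ⊢
  rw [this]
  abel

/-- Let `T₀ → T₁ → ⋯` be a sequence in a triangulated category with countable
coproducts and let `M` be its Milnor colimit, i.e. the cone of `id − shift : ∐ Tᵢ → ∐ Tᵢ`.
If `X` satisfies `Hom(Tᵢ, X[n]) = 0` for all `i ≥ 0`, `n > 0`, and the inverse system
`Hom(Tᵢ, X)` has surjective transition maps, then `Hom(M, X[n]) = 0` for all `n > 0`. -/
theorem stmt_5 {C : Type*} [Category C] [Preadditive C] [HasZeroObject C]
    [HasShift C ℤ] [∀ n : ℤ, (shiftFunctor C n).Additive] [Pretriangulated C]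
    [HasCountableCoproducts C]
    (T : ℕ → C) (f : ∀ i, T i ⟶ T (i + 1))
    (M : C) (π : (∐ T) ⟶ M) (δ : M ⟶ (∐ T)⟦(1 : ℤ)⟧)
    -- `M` is the Milnor colimit: the cone of `id − (fᵢ)`
    (hM : Triangle.mk
        (Sigma.desc (fun i => Sigma.ι T i - (f i ≫ Sigma.ι T (i + 1)))) π δ ∈ distTriang C)
    (X : C)
    (hvan : ∀ (i : ℕ) (n : ℤ), 0 < n → ∀ g : T i ⟶ X⟦n⟧, g = 0)
    (hsurj : ∀ i : ℕ, Function.Surjective (fun g : T (i + 1) ⟶ X => f i ≫ g)) :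
    ∀ n : ℤ, 0 < n → ∀ g : M ⟶ X⟦n⟧, g = 0 := by
  intro n hn g
  set u : (∐ T) ⟶ (∐ T) :=
    Sigma.desc (fun i => Sigma.ι T i - (f i ≫ Sigma.ι T (i + 1))) with hu
  -- Step 1: π ≫ g = 0
  have hπg : π ≫ g = 0 := by
    ext i
    simpa using hvan i n hn (Sigma.ι T i ≫ π ≫ g)
  -- Step 2: g factors through δ
  obtain ⟨h, hg⟩ := Triangle.yoneda_exact₃ _ hM g hπg
  -- Step 3: unshift h
  let α : (((X⟦n⟧)⟦(-1 : ℤ)⟧)⟦(1 : ℤ)⟧ ≅ X⟦n⟧) := (shiftEquiv C (1 : ℤ)).counitIso.app (X⟦n⟧)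
  let k : (∐ T) ⟶ (X⟦n⟧)⟦(-1 : ℤ)⟧ := (shiftFunctor C (1 : ℤ)).preimage (h ≫ α.inv)
  have hhk : h = (shiftFunctor C (1 : ℤ)).map k ≫ α.hom := by
    erw [show (shiftFunctor C (1 : ℤ)).map k = h ≫ α.inv from Functor.map_preimage _ _,
      Category.assoc, Iso.inv_hom_id, Category.comp_id]
  -- Step 4: k factors through u
  have hfac : ∃ k' : (∐ T) ⟶ (X⟦n⟧)⟦(-1 : ℤ)⟧, u ≫ k' = k := by
    rcases eq_or_lt_of_le (Int.add_one_le_iff.mpr hn) with h1 | h1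
    · -- n = 1
      have hn1 : n = 1 := by omega
      subst hn1
      let β : X ≅ (X⟦(1 : ℤ)⟧)⟦(-1 : ℤ)⟧ :=
        ((shiftFunctorZero C ℤ).app X).symm ≪≫
          (shiftFunctorAdd' C (1 : ℤ) (-1 : ℤ) 0 (by ring)).app X
      obtain ⟨gs, hgs⟩ := stmt_5_aux T f X hsurj (fun i => Sigma.ι T i ≫ k ≫ β.inv)
      refine ⟨Sigma.desc (fun i => gs i ≫ β.hom), ?_⟩
      ext i
      have hc : Sigma.ι T i ≫ u = Sigma.ι T i - (f i ≫ Sigma.ι T (i + 1)) := by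
        simp [hu]
      rw [← Category.assoc, hc]
      simp only [Preadditive.sub_comp, Category.assoc, colimit.ι_desc, Cofan.mk_ι_app]
      calc gs i ≫ β.hom - f i ≫ gs (i + 1) ≫ β.hom
          = (gs i - f i ≫ gs (i + 1)) ≫ β.hom := by
            rw [Preadditive.sub_comp, Category.assoc]
        _ = (Sigma.ι T i ≫ k ≫ β.inv) ≫ β.hom := by rw [hgs i]
        _ = Sigma.ι T i ≫ k := by
            simp only [Category.assoc, Iso.inv_hom_id, Category.comp_id]
    · -- n > 1
      refine ⟨0, ?_⟩
      have hk0 : k = 0 := by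
        ext i
        let γ : X⟦n - 1⟧ ≅ (X⟦n⟧)⟦(-1 : ℤ)⟧ :=
          (shiftFunctorAdd' C n (-1 : ℤ) (n - 1) (by ring)).app X
        have hz : (Sigma.ι T i ≫ k) ≫ γ.inv = 0 := hvan i (n - 1) (by omega) _
        calc Sigma.ι T i ≫ k = ((Sigma.ι T i ≫ k) ≫ γ.inv) ≫ γ.hom := by
              simp only [Category.assoc, Iso.inv_hom_id, Category.comp_id]
          _ = 0 := by rw [hz, zero_comp]
          _ = Sigma.ι T i ≫ (0 : (∐ T) ⟶ (X⟦n⟧)⟦(-1 : ℤ)⟧) := by rw [comp_zero]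
      rw [hk0, comp_zero]
  obtain ⟨k', hk'⟩ := hfac
  -- Step 5: conclude
  have hδu : δ ≫ (shiftFunctor C (1 : ℤ)).map u = 0 :=
    comp_distTriang_mor_zero₃₁ _ hM
  rw [hg]
  show δ ≫ h = 0
  rw [hhk, ← hk', Functor.map_comp, ← Category.assoc, ← Category.assoc,
    hδu, zero_comp, zero_comp]
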